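/- For a Weyl group W with parabolic subgroup W_P, and any u, w in W and v in W_P: u ≤_P w if and only if uv ≤_P wv, where ≤_P is the extended P-Bruhat order (the transitive closure of the relations u →_P w meaning w = u·s_α for some positive root α not in the positive roots of W_P with ℓ(w) > ℓ(u)). -/

import Mathlib

/-!
STATEMENT 0: For a Weyl group `W` (formalized as a finite Coxeter group given by a
`CoxeterSystem`) with parabolic subgroup `W_P` (generated by a subset `J` of the simple
reflections), and any `u w ∈ W` and `v ∈ W_P`:  `u ≤_P w ↔ u*v ≤_P w*v`, where `≤_P` is the
extended `P`-Bruhat order: the reflexive-transitive closure of `u →_P w` meaning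
`w = u * s_α` for a reflection `s_α` with `α ∈ R⁺ \ R_P⁺` (equivalently, a reflection not
lying in `W_P`) such that `ℓ(w) > ℓ(u)`.
-/

open CoxeterSystem

variable {B W : Type*} [Group W]

/-- The parabolic subgroup `W_P` generated by the simple reflections indexed by `J`. -/
def parabolicSubgroup {M : CoxeterMatrix B} (cs : CoxeterSystem M W) (J : Set B) : Subgroup W :=
  Subgroup.closure (cs.simple '' J)

/-- One step of the extended `P`-Bruhat order: right multiplication by a reflection `s_α`
with `α ∈ R⁺ \ R_P⁺` (i.e. a reflection of `W` not lying in `W_P`) that increases length. -/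
def extPStep {M : CoxeterMatrix B} (cs : CoxeterSystem M W) (J : Set B) (u w : W) : Prop :=
  ∃ t : W, cs.IsReflection t ∧ t ∉ parabolicSubgroup cs J ∧ w = u * t ∧
    cs.length u < cs.length w

/-- The extended `P`-Bruhat order `≤_P`: the reflexive-transitive closure of `extPStep`. -/
def extPLE {M : CoxeterMatrix B} (cs : CoxeterSystem M W) (J : Set B) : W → W → Prop :=
  Relation.ReflTransGen (extPStep cs J)

namespace ExtPAux

variable {B W : Type*} [Group W] {M : CoxeterMatrix B} (cs : CoxeterSystem M W)

/-! ### Right inversion sequences of concatenations -/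

theorem ris_cons (i : B) (ω : List B) :
    cs.rightInvSeq (i :: ω) =
      ((cs.wordProd ω)⁻¹ * cs.simple i * cs.wordProd ω) :: cs.rightInvSeq ω := rfl

theorem ris_append (ω₁ ω₂ : List B) :
    cs.rightInvSeq (ω₁ ++ ω₂) =
      (cs.rightInvSeq ω₁).map (fun t => (cs.wordProd ω₂)⁻¹ * t * cs.wordProd ω₂)
        ++ cs.rightInvSeq ω₂ := by
  induction ω₁ with
  | nil => simp
  | cons i ω₁ ih =>
    rw [List.cons_append, ris_cons, ris_cons, ih, List.map_cons, List.cons_append]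
    congr 1
    rw [cs.wordProd_append]
    group

theorem lis_eq_map (ω : List B) :
    cs.leftInvSeq ω =
      (cs.rightInvSeq ω).map (fun r => cs.wordProd ω * r * (cs.wordProd ω)⁻¹) := by
  induction ω with
  | nil => simp
  | cons i ω ih =>
    have h1 : cs.leftInvSeq (i :: ω)
        = cs.simple i :: (cs.leftInvSeq ω).map (MulAut.conj (cs.simple i)) := rfl
    rw [h1, ris_cons, List.map_cons, ih, List.map_map]
    congr 1
    · rw [cs.wordProd_cons]
      group
    · apply List.map_congr_left
      intro r _
      simp only [Function.comp_apply, MulAut.conj_apply, cs.wordProd_cons]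
      group

/-! ### The sign representation on `W × ZMod 2` -/

section SignRep

variable [DecidableEq W]

private theorem one_add_one_zmod2 : (1 : ZMod 2) + 1 = 0 := by decide

/-- The permutation of `W × ZMod 2` associated to the simple reflection `s i`. -/
def refP (i : B) : Equiv.Perm (W × ZMod 2) :=
  Function.Involutive.toPerm
    (fun p => (cs.simple i * p.1 * cs.simple i, p.2 + if p.1 = cs.simple i then 1 else 0))
    (by
      rintro ⟨t, ε⟩
      have hss := cs.simple_mul_simple_self i
      have hcond : (cs.simple i * t * cs.simple i = cs.simple i) ↔ t = cs.simple i := by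
        constructor
        · intro h
          have h1 : cs.simple i * t = 1 := by
            apply mul_right_cancel (b := cs.simple i)
            rw [one_mul]
            exact h
          have h2 : (cs.simple i)⁻¹ = t := inv_eq_of_mul_eq_one_right h1
          rw [← h2, cs.inv_simple]
        · intro h
          rw [h, hss, one_mul]
      simp only [Prod.mk.injEq]
      constructor
      · rw [show cs.simple i * (cs.simple i * t * cs.simple i) * cs.simple i
            = (cs.simple i * cs.simple i) * t * (cs.simple i * cs.simple i) by group,
          hss, one_mul, mul_one]
      · rw [if_congr hcond rfl rfl]
        by_cases h : t = cs.simple i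
        · rw [if_pos h, add_assoc, one_add_one_zmod2, add_zero]
        · rw [if_neg h, add_zero, add_zero])

theorem refP_apply (i : B) (t : W) (ε : ZMod 2) :
    refP cs i (t, ε) =
      (cs.simple i * t * cs.simple i, ε + if t = cs.simple i then 1 else 0) := rfl

theorem simple_mul_pow (i i' : B) (a : ℕ) :
    cs.simple i' * (cs.simple i * cs.simple i') ^ a
      = ((cs.simple i * cs.simple i') ^ a)⁻¹ * cs.simple i' := by
  induction a with
  | zero => simp
  | succ a ih =>
    have hbase : cs.simple i' * (cs.simple i * cs.simple i')
        = (cs.simple i * cs.simple i')⁻¹ * cs.simple i' := by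
      rw [mul_inv_rev, cs.inv_simple, cs.inv_simple]
      group
    rw [pow_succ, ← mul_assoc, ih, mul_assoc, hbase, ← mul_assoc, ← mul_inv_rev, ← pow_succ', ← pow_succ]

theorem conj_pow_simple (i i' : B) (a : ℕ) :
    (((cs.simple i * cs.simple i') ^ a)⁻¹ * cs.simple i' * (cs.simple i * cs.simple i') ^ a)
      = ((cs.simple i * cs.simple i') ^ (2 * a))⁻¹ * cs.simple i' := by
  rw [mul_assoc, simple_mul_pow, ← mul_assoc, ← mul_inv_rev, ← pow_add, two_mul]

theorem refP_mul_pow_apply (i i' : B) (k : ℕ) (t : W) (ε : ZMod 2) :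
    ((refP cs i * refP cs i') ^ k) (t, ε) =
      ((cs.simple i * cs.simple i') ^ k * t * ((cs.simple i * cs.simple i') ^ k)⁻¹,
        ε + ∑ b ∈ Finset.range (2 * k),
          if t = ((cs.simple i * cs.simple i') ^ b)⁻¹ * cs.simple i' then 1 else 0) := by
  induction k with
  | zero => simp
  | succ k ih =>
    rw [pow_succ', Equiv.Perm.mul_apply, ih, Equiv.Perm.mul_apply, refP_apply, refP_apply]
    set x := cs.simple i * cs.simple i' with hx
    have hss' := cs.simple_mul_simple_self i'
    have e1 : ∀ a : ℕ, (x ^ a)⁻¹ * cs.simple i' * x ^ a = (x ^ (2 * a))⁻¹ * cs.simple i' := by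
      intro a
      rw [hx]
      exact conj_pow_simple cs i i' a
    have hsp : ∀ a : ℕ, cs.simple i' * x ^ a = (x ^ a)⁻¹ * cs.simple i' := by
      intro a
      rw [hx]
      exact simple_mul_pow cs i i' a
    have hbab : cs.simple i' * cs.simple i * cs.simple i' = x⁻¹ * cs.simple i' := by
      rw [hx, mul_inv_rev, cs.inv_simple, cs.inv_simple, mul_assoc]
    have hc1 : (x ^ k * t * (x ^ k)⁻¹ = cs.simple i')
        ↔ (t = (x ^ (2 * k))⁻¹ * cs.simple i') := by
      rw [← e1 k]
      constructor
      · intro h; rw [← h]; group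
      · intro h; rw [h, ← mul_assoc]; group
    have e2 : (x ^ k)⁻¹ * (x⁻¹ * cs.simple i') * x ^ k
        = (x ^ (2 * k + 1))⁻¹ * cs.simple i' := by
      rw [show (x ^ k)⁻¹ * (x⁻¹ * cs.simple i') * x ^ k
          = (x ^ (k + 1))⁻¹ * (cs.simple i' * x ^ k) by rw [pow_succ']; group,
        hsp k, ← mul_assoc, ← mul_inv_rev, ← pow_add,
        show k + (k + 1) = 2 * k + 1 by omega]
    have hconj : (cs.simple i' * (x ^ k * t * (x ^ k)⁻¹) * cs.simple i' = cs.simple i)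
        ↔ (x ^ k * t * (x ^ k)⁻¹ = cs.simple i' * cs.simple i * cs.simple i') := by
      constructor
      · intro h
        have h2 := congrArg (fun z => cs.simple i' * z * cs.simple i') h
        rw [show cs.simple i' * (cs.simple i' * (x ^ k * t * (x ^ k)⁻¹) * cs.simple i')
            * cs.simple i' = (cs.simple i' * cs.simple i') * (x ^ k * t * (x ^ k)⁻¹)
            * (cs.simple i' * cs.simple i') by group, hss', one_mul, mul_one] at h2
        exact h2
      · intro h
        rw [h, show cs.simple i' * (cs.simple i' * cs.simple i * cs.simple i') * cs.simple i'
            = (cs.simple i' * cs.simple i') * cs.simple i * (cs.simple i' * cs.simple i')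
            by group, hss', one_mul, mul_one]
    have hc2 : (cs.simple i' * (x ^ k * t * (x ^ k)⁻¹) * cs.simple i' = cs.simple i)
        ↔ (t = (x ^ (2 * k + 1))⁻¹ * cs.simple i') := by
      rw [hconj, hbab, ← e2]
      constructor
      · intro h; rw [← h]; group
      · intro h; rw [h]; group
    simp only [Prod.mk.injEq]
    constructor
    · rw [show cs.simple i * (cs.simple i' * (x ^ k * t * (x ^ k)⁻¹) * cs.simple i')
          * cs.simple i = (x * x ^ k) * t * ((x ^ k)⁻¹ * x⁻¹) by
            rw [hx, mul_inv_rev, cs.inv_simple, cs.inv_simple]; group,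
        ← pow_succ', ← mul_inv_rev, ← pow_succ']
    · rw [if_congr hc1 rfl rfl, if_congr hc2 rfl rfl,
        show 2 * (k + 1) = 2 * k + 1 + 1 by ring, Finset.sum_range_succ, Finset.sum_range_succ]
      ring

theorem refP_liftable : M.IsLiftable (refP cs) := by
  intro i i'
  rcases Nat.eq_zero_or_pos (M i i') with h | _
  · rw [h, pow_zero]
  · apply Equiv.ext
    rintro ⟨t, ε⟩
    rw [refP_mul_pow_apply]
    have hx : (cs.simple i * cs.simple i') ^ (M i i') = 1 := cs.simple_mul_simple_pow i i'
    have hsum : (∑ b ∈ Finset.range (2 * M i i'),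
        if t = ((cs.simple i * cs.simple i') ^ b)⁻¹ * cs.simple i' then (1 : ZMod 2) else 0)
        = 0 := by
      rw [two_mul, Finset.sum_range_add]
      have : ∀ b, ((cs.simple i * cs.simple i') ^ (M i i' + b))⁻¹
          = ((cs.simple i * cs.simple i') ^ b)⁻¹ := by
        intro b
        rw [pow_add, hx, one_mul]
      have heq : (∑ b ∈ Finset.range (M i i'),
          if t = ((cs.simple i * cs.simple i') ^ (M i i' + b))⁻¹ * cs.simple i'
            then (1 : ZMod 2) else 0)
          = ∑ b ∈ Finset.range (M i i'),
          if t = ((cs.simple i * cs.simple i') ^ b)⁻¹ * cs.simple i'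
            then (1 : ZMod 2) else 0 := by
        apply Finset.sum_congr rfl
        intro b _
        rw [this b]
      rw [heq]
      exact CharTwo.add_self_eq_zero _
    rw [hsum, hx, add_zero]
    simp

/-- The sign representation of `W` on `W × ZMod 2`. -/
def sgn : W →* Equiv.Perm (W × ZMod 2) := cs.lift ⟨refP cs, refP_liftable cs⟩

theorem sgn_simple (i : B) : sgn cs (cs.simple i) = refP cs i :=
  cs.lift_apply_simple (refP_liftable cs) i

theorem sgn_wordProd (ω : List B) (t : W) (ε : ZMod 2) :
    sgn cs (cs.wordProd ω) (t, ε) =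
      (cs.wordProd ω * t * (cs.wordProd ω)⁻¹,
        ε + ((cs.rightInvSeq ω).count t : ZMod 2)) := by
  induction ω with
  | nil => simp
  | cons i ω ih =>
    rw [cs.wordProd_cons, map_mul, Equiv.Perm.mul_apply, ih, sgn_simple, refP_apply]
    have hcond : (cs.wordProd ω * t * (cs.wordProd ω)⁻¹ = cs.simple i)
        ↔ ((cs.wordProd ω)⁻¹ * cs.simple i * cs.wordProd ω = t) := by
      constructor
      · intro h; rw [← h]; group
      · intro h; rw [← h]; group
    simp only [Prod.mk.injEq]
    constructor
    · rw [mul_inv_rev, cs.inv_simple]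
      group
    · rw [ris_cons, List.count_cons]
      push_cast
      simp only [beq_iff_eq]
      by_cases hc : (cs.wordProd ω)⁻¹ * cs.simple i * cs.wordProd ω = t
      · rw [if_pos hc, if_pos (hcond.mpr hc)]
        ring
      · rw [if_neg hc, if_neg (fun hcc => hc (hcond.mp hcc))]
        ring

theorem count_ris_parity {ω₁ ω₂ : List B} (h : cs.wordProd ω₁ = cs.wordProd ω₂) (t : W) :
    ((cs.rightInvSeq ω₁).count t : ZMod 2) = ((cs.rightInvSeq ω₂).count t : ZMod 2) := by
  have h1 := sgn_wordProd cs ω₁ t 0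
  have h2 := sgn_wordProd cs ω₂ t 0
  rw [h] at h1
  rw [h1] at h2
  have := congrArg Prod.snd h2
  simpa using this

theorem exists_refl_word {t : W} (ht : cs.IsReflection t) :
    ∃ ψ : List B, cs.wordProd ψ = t ∧ ((cs.rightInvSeq ψ).count t : ZMod 2) = 1 := by
  obtain ⟨v, i, htv⟩ := ht
  obtain ⟨θ, hθ⟩ := cs.wordProd_surjective v
  refine ⟨θ ++ ([i] ++ θ.reverse), ?_, ?_⟩
  · rw [cs.wordProd_append, cs.wordProd_append, cs.wordProd_reverse, cs.wordProd_singleton,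
      hθ, htv, mul_assoc]
  · rw [ris_append, ris_append, List.count_append, List.count_append]
    have hπ : cs.wordProd ([i] ++ θ.reverse) = cs.simple i * v⁻¹ := by
      rw [cs.wordProd_append, cs.wordProd_singleton, cs.wordProd_reverse, hθ]
    have hinj : ∀ g h : W, Function.Injective (fun r : W => g * r * h) := by
      intro g h a b hab
      simp only at hab
      exact mul_left_cancel (mul_right_cancel hab)
    -- first part
    have c1 : ((cs.rightInvSeq θ).map
        (fun r => (cs.wordProd ([i] ++ θ.reverse))⁻¹ * r * cs.wordProd ([i] ++ θ.reverse))).count t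
        = (cs.rightInvSeq θ).count (cs.simple i) := by
      have himg : t = (cs.wordProd ([i] ++ θ.reverse))⁻¹ * cs.simple i
          * cs.wordProd ([i] ++ θ.reverse) := by
        rw [hπ, htv, mul_inv_rev, inv_inv, cs.inv_simple,
          cs.simple_mul_simple_cancel_right, mul_assoc]
      rw [← List.count_map_of_injective (cs.rightInvSeq θ) _
        (hinj (cs.wordProd ([i] ++ θ.reverse))⁻¹ (cs.wordProd ([i] ++ θ.reverse)))
        (cs.simple i), ← himg]
    -- middle part
    have c2 : ((cs.rightInvSeq [i]).map
        (fun r => (cs.wordProd θ.reverse)⁻¹ * r * cs.wordProd θ.reverse)).count t = 1 := by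
      rw [cs.rightInvSeq_singleton, List.map_singleton, cs.wordProd_reverse, hθ, inv_inv]
      have : v * cs.simple i * v⁻¹ = t := htv.symm
      rw [this, List.count_singleton]
      simp
    -- last part
    have c3 : (cs.rightInvSeq θ.reverse).count t
        = (cs.rightInvSeq θ).count (cs.simple i) := by
      rw [cs.rightInvSeq_reverse, List.count_reverse, lis_eq_map, hθ]
      have himg : t = v * cs.simple i * v⁻¹ := htv
      rw [← List.count_map_of_injective (cs.rightInvSeq θ) _ (hinj v v⁻¹) (cs.simple i), ← himg]
    rw [c1, c2, c3]
    push_cast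
    ring_nf
    have hself := CharTwo.add_self_eq_zero ((cs.rightInvSeq θ).count (cs.simple i) : ZMod 2)
    linear_combination hself

theorem count_mul_refl {t : W} (ht : cs.IsReflection t) (ω : List B) :
    ∃ ω' : List B, cs.wordProd ω' = cs.wordProd ω * t ∧
      ((cs.rightInvSeq ω').count t : ZMod 2) = ((cs.rightInvSeq ω).count t : ZMod 2) + 1 := by
  obtain ⟨ψ, hψ, hcount⟩ := exists_refl_word cs ht
  refine ⟨ω ++ ψ, ?_, ?_⟩
  · rw [cs.wordProd_append, hψ]
  · rw [ris_append, List.count_append, hψ]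
    have c1 : ((cs.rightInvSeq ω).map (fun r => t⁻¹ * r * t)).count t
        = (cs.rightInvSeq ω).count t := by
      have hinj : Function.Injective (fun r : W => t⁻¹ * r * t) := by
        intro a b hab
        simp only at hab
        exact mul_left_cancel (mul_right_cancel hab)
      have himg : t = t⁻¹ * t * t := by group
      rw [← List.count_map_of_injective (cs.rightInvSeq ω) _ hinj t, ← himg]
    rw [c1]
    push_cast
    rw [hcount]

/-- Strong exchange property (membership form). -/
theorem mem_ris_of_isRightInversion {ω : List B} (hω : cs.IsReduced ω) {t : W}
    (ht : cs.IsReflection t) (hlt : cs.length (cs.wordProd ω * t) < cs.length (cs.wordProd ω)) :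
    t ∈ cs.rightInvSeq ω := by
  have hzmod : ∀ z : ZMod 2, z = 0 ∨ z = 1 := by decide
  have hcount : ((cs.rightInvSeq ω).count t : ZMod 2) = 1 := by
    rcases hzmod ((cs.rightInvSeq ω).count t : ZMod 2) with h0 | h1
    · exfalso
      obtain ⟨ω', hω', hcount'⟩ := count_mul_refl cs ht ω
      obtain ⟨τ, hτred, hτ⟩ := cs.exists_reduced_word' (cs.wordProd ω * t)
      have hpar := count_ris_parity cs (show cs.wordProd τ = cs.wordProd ω' by rw [hω', ← hτ]) t
      rw [hcount', h0, zero_add] at hpar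
      have hmem : t ∈ cs.rightInvSeq τ := by
        have : (cs.rightInvSeq τ).count t ≠ 0 := by
          intro hz
          rw [hz] at hpar
          simp at hpar
        exact List.count_pos_iff.mp (Nat.pos_of_ne_zero this)
      have hinv := cs.isRightInversion_of_mem_rightInvSeq hτred hmem
      have : cs.length (cs.wordProd τ * t) < cs.length (cs.wordProd τ) := hinv.2
      rw [← hτ, mul_assoc, ht.mul_self, mul_one] at this
      omega
    · exact h1
  have : (cs.rightInvSeq ω).count t ≠ 0 := by
    intro hz
    rw [hz] at hcount
    simp at hcount
  exact List.count_pos_iff.mp (Nat.pos_of_ne_zero this)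

end SignRep

/-- The lifting-type lemma: if `ℓ(ut) = ℓ(u) + 1`, `ℓ(us_i) = ℓ(u) + 1` and
`ℓ(uts_i) = ℓ(u)`, then `t = s_i`. -/
theorem eq_simple_of_lengths {u t : W} (ht : cs.IsReflection t) (i : B)
    (h1 : cs.length (u * t) = cs.length u + 1)
    (h2 : cs.length (u * cs.simple i) = cs.length u + 1)
    (h3 : cs.length (u * t * cs.simple i) = cs.length u) :
    t = cs.simple i := by
  classical
  obtain ⟨τ, hτred, hτ⟩ := cs.exists_reduced_word' (u * t * cs.simple i)
  have hπ : cs.wordProd (τ ++ [i]) = u * t := by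
    rw [cs.wordProd_append, cs.wordProd_singleton, ← hτ, cs.simple_mul_simple_cancel_right]
  have hred : cs.IsReduced (τ ++ [i]) := by
    unfold CoxeterSystem.IsReduced
    rw [hπ, List.length_append, List.length_singleton]
    have : τ.length = cs.length u := by
      have := hτred
      unfold CoxeterSystem.IsReduced at this
      rw [← hτ, h3] at this
      omega
    omega
  have hlt : cs.length (cs.wordProd (τ ++ [i]) * t) < cs.length (cs.wordProd (τ ++ [i])) := by
    rw [hπ, mul_assoc, ht.mul_self, mul_one, h1]
    omega
  have hmem := mem_ris_of_isRightInversion cs hred ht hlt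
  rw [ris_append, List.mem_append] at hmem
  rcases hmem with hmem | hmem
  · exfalso
    obtain ⟨r, hr, hrt⟩ := List.mem_map.mp hmem
    have hinv := cs.isRightInversion_of_mem_rightInvSeq hτred hr
    have hlen : cs.length (cs.wordProd τ * r) < cs.length (cs.wordProd τ) := hinv.2
    have hr_eq : r = cs.simple i * t * cs.simple i := by
      rw [cs.wordProd_singleton, cs.inv_simple] at hrt
      rw [← hrt]
      rw [show cs.simple i * (cs.simple i * r * cs.simple i) * cs.simple i
          = (cs.simple i * cs.simple i) * r * (cs.simple i * cs.simple i) by group,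
        cs.simple_mul_simple_self, one_mul, mul_one]
    have : cs.wordProd τ * r = u * cs.simple i := by
      rw [hr_eq, ← hτ]
      have := ht.mul_self
      calc u * t * cs.simple i * (cs.simple i * t * cs.simple i)
          = u * t * (cs.simple i * cs.simple i) * t * cs.simple i := by group
        _ = u * (t * t) * cs.simple i := by rw [cs.simple_mul_simple_self]; group
        _ = u * cs.simple i := by rw [ht.mul_self]; group
    rw [this, ← hτ, h3, h2] at hlen
    omega
  · rw [cs.rightInvSeq_singleton] at hmem
    simpa using hmem

/-! ### One-step invariance -/

theorem extPStep_mul_simple {J : Set B} {u w : W} (i : B) (hi : i ∈ J)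
    (h : extPStep cs J u w) : extPStep cs J (u * cs.simple i) (w * cs.simple i) := by
  classical
  obtain ⟨t, htr, htP, rfl, hlt⟩ := h
  have hsimple_mem : cs.simple i ∈ parabolicSubgroup cs J :=
    Subgroup.subset_closure ⟨i, hi, rfl⟩
  refine ⟨cs.simple i * t * cs.simple i, ?_, ?_, by
    rw [show (u * cs.simple i) * (cs.simple i * t * cs.simple i)
        = u * (cs.simple i * cs.simple i) * t * cs.simple i by group,
      cs.simple_mul_simple_self, mul_one], ?_⟩
  · have := htr.conj (cs.simple i)
    rwa [cs.inv_simple] at this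
  · intro hmem
    apply htP
    have : t = cs.simple i * (cs.simple i * t * cs.simple i) * cs.simple i := by
      rw [show cs.simple i * (cs.simple i * t * cs.simple i) * cs.simple i
          = (cs.simple i * cs.simple i) * t * (cs.simple i * cs.simple i) by group,
        cs.simple_mul_simple_self, one_mul, mul_one]
    rw [this]
    exact Subgroup.mul_mem _ (Subgroup.mul_mem _ hsimple_mem hmem) hsimple_mem
  · -- length inequality
    have hpar : cs.length (u * t) % 2 ≠ cs.length u % 2 := by
      have hmod := cs.length_mul_mod_two u t
      obtain ⟨m, hm⟩ := htr.odd_length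
      omega
    rcases cs.length_mul_simple (u * t) i with hw | hw
    · -- ℓ(w s) = ℓ(w) + 1
      rcases cs.length_mul_simple u i with hu | hu <;> omega
    · -- ℓ(w s) + 1 = ℓ(w)
      rcases cs.length_mul_simple u i with hu | hu
      · -- ℓ(u s) = ℓ(u) + 1 : the delicate case
        by_cases hcov : cs.length (u * t) = cs.length u + 1
        · exfalso
          apply htP
          have hts : t = cs.simple i := by
            apply eq_simple_of_lengths cs htr i hcov hu
            omega
          rw [hts]
          exact hsimple_mem
        · omega
      · omega

theorem extPLE_mul_simple {J : Set B} {u w : W} (i : B) (hi : i ∈ J)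
    (h : extPLE cs J u w) : extPLE cs J (u * cs.simple i) (w * cs.simple i) :=
  Relation.ReflTransGen.lift (fun z => z * cs.simple i)
    (fun _ _ hab => extPStep_mul_simple cs i hi hab) _ _ h

theorem extPLE_iff_of_mem {J : Set B} {v : W} (hv : v ∈ parabolicSubgroup cs J) :
    ∀ u w : W, extPLE cs J u w ↔ extPLE cs J (u * v) (w * v) := by
  induction hv using Subgroup.closure_induction with
  | mem x hx =>
    obtain ⟨i, hi, rfl⟩ := hx
    intro u w
    constructor
    · exact extPLE_mul_simple cs i hi
    · intro h
      have := extPLE_mul_simple cs i hi h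
      rwa [cs.simple_mul_simple_cancel_right, cs.simple_mul_simple_cancel_right] at this
  | one => intro u w; simp
  | mul x y hx hy ihx ihy =>
    intro u w
    rw [← mul_assoc, ← mul_assoc]
    exact (ihx u w).trans (ihy (u * x) (w * x))
  | inv x hx ihx =>
    intro u w
    have := (ihx (u * x⁻¹) (w * x⁻¹)).symm
    rwa [inv_mul_cancel_right, inv_mul_cancel_right] at this

end ExtPAux

theorem extPLE_right_mul_invariant [Finite W] {M : CoxeterMatrix B}
    (cs : CoxeterSystem M W) (J : Set B) (u w v : W)
    (hv : v ∈ parabolicSubgroup cs J) :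
    extPLE cs J u w ↔ extPLE cs J (u * v) (w * v) :=
  ExtPAux.extPLE_iff_of_mem cs hv u w
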